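/- arXiv:1909.07024 — 7 statements merged into one kernel-verified Lean document; each statement's English description precedes it below -/
import Mathlib

section
/- The homology of a stabilization equals the homology of the original DGA: for any DGA (A, ∂) and any degree i, the inclusion A → A * E^i into the degree-i algebraic stabilization induces an isomorphism on homology. -/
/- Free unital associative ℤ-algebra on a type `X` of generators,
realized as the monoid algebra of the free monoid on `X`. -/
noncomputable section

abbrev FAlg (X : Type) : Type := MonoidAlgebra ℤ (FreeMonoid X)

/-- The generator `x` as an element of the free algebra. -/
def fgen {X : Type} (x : X) : FAlg X :=
  MonoidAlgebra.of ℤ (FreeMonoid X) (FreeMonoid.of x)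

/-- Degree of a word, given degrees of the generators. -/
def wdeg {X : Type} (deg : X → ℤ) (w : FreeMonoid X) : ℤ :=
  ((FreeMonoid.toList w).map deg).sum

/-- An element is homogeneous of degree `d` if every word in its support has degree `d`. -/
def Homog {X : Type} (deg : X → ℤ) (d : ℤ) (a : FAlg X) : Prop :=
  ∀ w ∈ a.coeff.support, wdeg deg w = d

/-- The sign `(-1)^d` for an integer degree `d`. -/
def sgn (d : ℤ) : ℤ := (((-1 : ℤˣ) ^ d : ℤˣ) : ℤ)

/-- The signed Leibniz rule `∂(vw) = (∂v)w + (-1)^(deg v) v (∂w)` for homogeneous `v`. -/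
def IsLeibniz {X : Type} (deg : X → ℤ) (D : FAlg X →ₗ[ℤ] FAlg X) : Prop :=
  ∀ (d : ℤ) (v w : FAlg X), Homog deg d v →
    D (v * w) = D v * w + sgn d • (v * D w)

/-- `D` has degree `-1`: it sends homogeneous elements of degree `d` to degree `d - 1`. -/
def LowersDeg {X : Type} (deg : X → ℤ) (D : FAlg X →ₗ[ℤ] FAlg X) : Prop :=
  ∀ (d : ℤ) (v : FAlg X), Homog deg d v → Homog deg (d - 1) (D v)

/-- A differential graded algebra: a free graded ℤ-algebra on finitely many
generators with a degree `-1` differential satisfying the signed Leibniz rule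
and `∂ ∘ ∂ = 0`. -/
structure DGA where
  n : ℕ
  deg : Fin n → ℤ
  D : FAlg (Fin n) →ₗ[ℤ] FAlg (Fin n)
  leibniz : IsLeibniz deg D
  lowers : LowersDeg deg D
  dsq : ∀ a, D (D a) = 0

/-- An elementary isomorphism: a graded chain algebra map sending one generator
`aᵢ` to `α aᵢ + v` (`α` a unit) and fixing all other generators. -/
def IsElementary (A B : DGA) (φ : FAlg (Fin A.n) →ₐ[ℤ] FAlg (Fin B.n)) : Prop :=
  ∃ hn : A.n = B.n,
    (∀ (d : ℤ) (v : FAlg (Fin A.n)), Homog A.deg d v → Homog B.deg d (φ v)) ∧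
    (∀ a, φ (A.D a) = B.D (φ a)) ∧
    ∃ i : Fin A.n,
      (∃ (α : (FAlg (Fin B.n))ˣ) (v : FAlg (Fin B.n)),
        φ (fgen i) = (α : FAlg (Fin B.n)) * fgen (Fin.cast hn i) + v) ∧
      ∀ j : Fin A.n, j ≠ i → φ (fgen j) = fgen (Fin.cast hn j)

def ElemRel (A B : DGA) : Prop := ∃ φ, IsElementary A B φ

/-- A tame isomorphism is a finite composition of elementary isomorphisms. -/
def TameIso : DGA → DGA → Prop := Relation.ReflTransGen ElemRel

def stabEmbFin (A B : DGA) (hn : B.n = A.n + 2) : Fin A.n → Fin B.n :=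
  fun j => Fin.cast hn.symm (Fin.castAdd 2 j)

/-- The inclusion of the free algebra induced by the inclusion of generators. -/
def stabMap (A B : DGA) (hn : B.n = A.n + 2) : FAlg (Fin A.n) → FAlg (Fin B.n) :=
  MonoidAlgebra.mapDomain (⇑(FreeMonoid.map (stabEmbFin A B hn)))

def stabE1 (A B : DGA) (hn : B.n = A.n + 2) : Fin B.n :=
  Fin.cast hn.symm (⟨A.n, by omega⟩ : Fin (A.n + 2))

def stabE2 (A B : DGA) (hn : B.n = A.n + 2) : Fin B.n :=
  Fin.cast hn.symm (⟨A.n + 1, by omega⟩ : Fin (A.n + 2))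

/-- `B` is the degree-`i` algebraic stabilization of `A`: it is obtained by
adjoining two new free generators `e₁, e₂` with `deg e₁ = i + 1`, `deg e₂ = i`,
`∂e₁ = e₂`, `∂e₂ = 0`, the differential extending that of `A`. -/
def IsStabilizationWith (A : DGA) (i : ℤ) (B : DGA) (hn : B.n = A.n + 2) : Prop :=
  (∀ j, B.deg (stabEmbFin A B hn j) = A.deg j) ∧
  B.deg (stabE1 A B hn) = i + 1 ∧
  B.deg (stabE2 A B hn) = i ∧
  (∀ a, B.D (stabMap A B hn a) = stabMap A B hn (A.D a)) ∧
  B.D (fgen (stabE1 A B hn)) = fgen (stabE2 A B hn) ∧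
  B.D (fgen (stabE2 A B hn)) = 0

def IsStabilization (A : DGA) (i : ℤ) (B : DGA) : Prop :=
  ∃ hn : B.n = A.n + 2, IsStabilizationWith A i B hn

/-- `B` is obtained from `A` by finitely many algebraic stabilizations. -/
def StabChain : DGA → DGA → Prop :=
  Relation.ReflTransGen (fun P Q => ∃ i : ℤ, IsStabilization P i Q)

/-- Two DGAs are stably tame isomorphic if after finitely many stabilizations
of each they become tame isomorphic. -/
def StableTameIso (A B : DGA) : Prop :=
  ∃ A' B', StabChain A A' ∧ StabChain B B' ∧ TameIso A' B'

namespace StabProof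

open MonoidAlgebra

/-! ### sign lemmas -/

lemma sgn_zero : sgn 0 = 1 := by simp [sgn]

lemma sgn_add (a b : ℤ) : sgn (a + b) = sgn a * sgn b := by
  rw [sgn, sgn, sgn, zpow_add, Units.val_mul]

lemma sgn_mul_self (d : ℤ) : sgn d * sgn d = 1 := by
  rcases Int.units_eq_one_or ((-1 : ℤˣ) ^ d) with h | h <;> simp [sgn, h]

lemma sgn_sub_one (d : ℤ) : sgn (d - 1) = -sgn d := by
  have : d - 1 = d + (-1) := by ring
  rw [this, sgn_add]
  have : sgn (-1) = -1 := by simp [sgn]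
  rw [this]; ring

lemma sgn_smul_sgn {M : Type*} [AddCommGroup M] [Module ℤ M] (d : ℤ) (y : M) :
    sgn d • sgn d • y = y := by
  rcases Int.units_eq_one_or ((-1 : ℤˣ) ^ d) with h | h <;> simp [sgn, h]

/-! ### words, degrees, homogeneity -/

lemma wdeg_one {X : Type} (deg : X → ℤ) : wdeg deg 1 = 0 := rfl

lemma wdeg_of {X : Type} (deg : X → ℤ) (x : X) : wdeg deg (FreeMonoid.of x) = deg x := by
  simp [wdeg]

lemma wdeg_of_mul {X : Type} (deg : X → ℤ) (x : X) (w : FreeMonoid X) :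
    wdeg deg (FreeMonoid.of x * w) = deg x + wdeg deg w := by
  simp [wdeg, FreeMonoid.toList_of_mul]

lemma homog_single {X : Type} (deg : X → ℤ) (w : FreeMonoid X) (c : ℤ) :
    Homog deg (wdeg deg w) (single w c) := by
  intro v hv
  have := Finsupp.support_single_subset hv
  simp only [Finset.mem_singleton] at this
  subst this; rfl

lemma fgen_eq {X : Type} (x : X) : fgen x = single (FreeMonoid.of x) 1 := rfl

lemma homog_fgen {X : Type} (deg : X → ℤ) (x : X) : Homog deg (deg x) (fgen x) := by
  have := homog_single deg (FreeMonoid.of x) 1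
  rwa [wdeg_of, ← fgen_eq] at this

lemma fgen_mul_single {X : Type} (x : X) (w : FreeMonoid X) (c : ℤ) :
    fgen x * single w c = single (FreeMonoid.of x * w) c := by
  rw [fgen_eq, single_mul_single, one_mul]

lemma single_smul {X : Type} (w : FreeMonoid X) (c : ℤ) :
    (single w c : FAlg X) = c • single w 1 := by
  rw [MonoidAlgebra.smul_single' c w 1, mul_one]

lemma homog_one {X : Type} (deg : X → ℤ) : Homog deg 0 (1 : FAlg X) := by
  have := homog_single deg (1 : FreeMonoid X) 1
  rwa [wdeg_one, ← one_def] at this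

lemma D_one (A : DGA) : A.D 1 = 0 := by
  have h := A.leibniz 0 1 1 (homog_one A.deg)
  rw [one_mul, sgn_zero, one_smul, one_mul, mul_one] at h
  -- h : A.D 1 = A.D 1 + A.D 1
  have h2 : A.D 1 + A.D 1 = A.D 1 + 0 := by rw [add_zero, ← h]
  exact (add_left_cancel h2)

end StabProof
namespace StabProof

open MonoidAlgebra

section Stab

variable (A B : DGA) (hn : B.n = A.n + 2)

/-- The generator embedding as a word map. -/
abbrev femb : FreeMonoid (Fin A.n) →* FreeMonoid (Fin B.n) :=
  FreeMonoid.map (stabEmbFin A B hn)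

lemma emb_val (j : Fin A.n) : ((stabEmbFin A B hn j : Fin B.n) : ℕ) = (j : ℕ) := rfl

lemma stabE1_val : ((stabE1 A B hn : Fin B.n) : ℕ) = A.n := rfl
lemma stabE2_val : ((stabE2 A B hn : Fin B.n) : ℕ) = A.n + 1 := rfl

lemma gen_cases (x : Fin B.n) :
    (x : ℕ) < A.n ∨ x = stabE1 A B hn ∨ x = stabE2 A B hn := by
  have hx : (x : ℕ) < A.n + 2 := by have := x.isLt; omega
  by_cases h1 : (x : ℕ) < A.n
  · exact Or.inl h1
  · right
    by_cases h2 : (x : ℕ) = A.n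
    · left; exact Fin.ext (by rw [h2, stabE1_val])
    · right; exact Fin.ext (by rw [stabE2_val]; omega)

lemma emb_mk (x : Fin B.n) (hx : (x : ℕ) < A.n) :
    stabEmbFin A B hn ⟨(x : ℕ), hx⟩ = x := Fin.ext rfl

lemma e1_not_old : ¬ ((stabE1 A B hn : Fin B.n) : ℕ) < A.n := by
  rw [stabE1_val]; omega

lemma e2_not_old : ¬ ((stabE2 A B hn : Fin B.n) : ℕ) < A.n := by
  rw [stabE2_val]; omega

lemma e1_ne_e2 : stabE1 A B hn ≠ stabE2 A B hn := by
  intro hEq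
  have := congrArg (fun x : Fin B.n => (x : ℕ)) hEq
  simp only [stabE1_val, stabE2_val] at this
  omega

/-! ### stabMap lemmas -/

lemma stab_single (w : FreeMonoid (Fin A.n)) (c : ℤ) :
    stabMap A B hn (single w c) = single (femb A B hn w) c :=
  MonoidAlgebra.mapDomain_single

lemma stab_mul (a b : FAlg (Fin A.n)) :
    stabMap A B hn (a * b) = stabMap A B hn a * stabMap A B hn b :=
  MonoidAlgebra.mapDomain_mul (femb A B hn) a b

lemma stab_one : stabMap A B hn 1 = 1 := by
  rw [one_def, stab_single, map_one, ← one_def]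

lemma stab_fgen (j : Fin A.n) :
    stabMap A B hn (fgen j) = fgen (stabEmbFin A B hn j) := by
  rw [fgen_eq, stab_single, FreeMonoid.map_of, ← fgen_eq]

/-- `stabMap` as a linear map. -/
def stabL : FAlg (Fin A.n) →ₗ[ℤ] FAlg (Fin B.n) :=
  MonoidAlgebra.mapDomainLinearMap ℤ ℤ (femb A B hn)

lemma stabL_apply (a : FAlg (Fin A.n)) : stabL A B hn a = stabMap A B hn a := rfl

/-! ### the projection π -/

def gmap : Fin B.n → FAlg (Fin A.n) :=
  fun x => if hx : (x : ℕ) < A.n then fgen (⟨(x : ℕ), hx⟩ : Fin A.n) else 0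

def piHom : FAlg (Fin B.n) →ₐ[ℤ] FAlg (Fin A.n) :=
  MonoidAlgebra.lift ℤ (FAlg (Fin A.n)) (FreeMonoid (Fin B.n))
    (FreeMonoid.lift (gmap A B))

lemma pi_single (w : FreeMonoid (Fin B.n)) (c : ℤ) :
    piHom A B (single w c) = c • FreeMonoid.lift (gmap A B) w :=
  MonoidAlgebra.lift_single _ _ _

lemma pi_fgen (x : Fin B.n) : piHom A B (fgen x) = gmap A B x := by
  rw [fgen_eq, pi_single, FreeMonoid.lift_eval_of, one_smul]

lemma pi_fgen_old (j : Fin A.n) :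
    piHom A B (fgen (stabEmbFin A B hn j)) = fgen j := by
  have hj : ((stabEmbFin A B hn j : Fin B.n) : ℕ) < A.n := by
    rw [emb_val]; exact j.isLt
  rw [pi_fgen]
  show (if hx : _ then _ else _) = _
  rw [dif_pos hj]
  exact congrArg fgen (Fin.ext (emb_val A B hn j))

lemma pi_fgen_e1 : piHom A B (fgen (stabE1 A B hn)) = 0 := by
  rw [pi_fgen]; exact dif_neg (e1_not_old A B hn)

lemma pi_fgen_e2 : piHom A B (fgen (stabE2 A B hn)) = 0 := by
  rw [pi_fgen]; exact dif_neg (e2_not_old A B hn)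

/-- P1 : π ∘ stabMap = id -/
lemma pi_stab (a : FAlg (Fin A.n)) : piHom A B (stabMap A B hn a) = a := by
  have : (piHom A B).toLinearMap ∘ₗ stabL A B hn = LinearMap.id := by
    refine MonoidAlgebra.lhom_ext' fun w => LinearMap.ext fun c => ?_
    show piHom A B (stabMap A B hn (single w c)) = single w c
    rw [stab_single, pi_single]
    rw [single_smul]
    congr 1
    induction w using FreeMonoid.recOn with
    | one => rw [map_one, map_one, ← one_def]
    | of_mul x xs ih =>
        rw [map_mul, map_mul, FreeMonoid.map_of, FreeMonoid.lift_eval_of, ih,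
          ← fgen_mul_single]
        congr 1
        rw [gmap]
        have hj : ((stabEmbFin A B hn x : Fin B.n) : ℕ) < A.n := by
          rw [emb_val]; exact x.isLt
        rw [dif_pos hj]
        exact congrArg fgen (Fin.ext (emb_val A B hn x))
  exact LinearMap.congr_fun this a

end Stab
end StabProof
namespace StabProof
open MonoidAlgebra

section Stab2
variable (A B : DGA) (hn : B.n = A.n + 2)

/-- P2: π is a chain map, word version. -/
lemma pi_chain_word (i : ℤ) (h : IsStabilizationWith A i B hn) (w : FreeMonoid (Fin B.n)) :
    piHom A B (B.D (single w 1)) = A.D (piHom A B (single w 1)) := by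
  obtain ⟨hdg, hd1, hd2, hDs, hDe1, hDe2⟩ := h
  induction w using FreeMonoid.recOn with
  | one =>
      rw [← one_def, D_one, map_zero, map_one, D_one]
  | of_mul x u ih =>
      rw [← fgen_mul_single]
      rw [B.leibniz (B.deg x) (fgen x) (single u 1) (homog_fgen B.deg x)]
      rw [map_add, map_smul, map_mul, map_mul, map_mul, ih]
      rcases gen_cases A B hn x with hx | hx | hx
      · set j : Fin A.n := ⟨(x : ℕ), hx⟩ with hj
        have hxj : stabEmbFin A B hn j = x := emb_mk A B hn x hx
        have h1 : piHom A B (B.D (fgen x)) = A.D (fgen j) := by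
          rw [← hxj, ← stab_fgen, hDs, pi_stab]
        have h2 : piHom A B (fgen x) = fgen j := by rw [← hxj, pi_fgen_old]
        have h3 : B.deg x = A.deg j := by rw [← hxj, hdg]
        rw [h1, h2, h3,
          A.leibniz (A.deg j) (fgen j) (piHom A B (single u 1)) (homog_fgen A.deg j)]
      · subst hx
        rw [hDe1, pi_fgen_e2, pi_fgen_e1]; simp
      · subst hx
        rw [hDe2, pi_fgen_e2]; simp

/-- P2: π is a chain map. -/
lemma pi_chain (i : ℤ) (h : IsStabilizationWith A i B hn) (b : FAlg (Fin B.n)) :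
    piHom A B (B.D b) = A.D (piHom A B b) := by
  induction b using MonoidAlgebra.induction_linear with
  | zero => simp
  | add f g hf hg => rw [map_add, map_add, hf, hg, map_add, map_add]
  | single w c =>
      show piHom A B (B.D (single w c)) = A.D (piHom A B (single w c))
      rw [single_smul, map_smul, map_smul, map_smul, map_smul,
        pi_chain_word A B hn i h w]

end Stab2
end StabProof
namespace StabProof
open MonoidAlgebra

/-- The word-level homotopy. -/
def Hw (A B : DGA) (hn : B.n = A.n + 2) : List (Fin B.n) → FAlg (Fin B.n)
  | [] => 0
  | x :: l =>
    if (x : ℕ) < A.n then sgn (B.deg x) • (fgen x * Hw A B hn l)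
    else if x = stabE2 A B hn then
      fgen (stabE1 A B hn) * single (FreeMonoid.ofList l) 1
    else 0

section Stab3
variable (A B : DGA) (hn : B.n = A.n + 2)

/-- The homotopy as a linear map. -/
def Hmap : FAlg (Fin B.n) →ₗ[ℤ] FAlg (Fin B.n) :=
  Finsupp.lift _ ℤ _ (fun w => Hw A B hn (FreeMonoid.toList w)) ∘ₗ
    (MonoidAlgebra.coeffLinearEquiv ℤ).toLinearMap

lemma Hmap_single (w : FreeMonoid (Fin B.n)) (c : ℤ) :
    Hmap A B hn (single w c) = c • Hw A B hn (FreeMonoid.toList w) := by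
  show (Finsupp.lift _ ℤ _ (fun w => Hw A B hn (FreeMonoid.toList w)))
      (Finsupp.single w c) = _
  rw [Finsupp.lift_apply, Finsupp.sum_single_index (by rw [zero_smul])]

lemma Hmap_one (c : ℤ) : Hmap A B hn (single 1 c) = 0 := by
  rw [Hmap_single]
  show c • Hw A B hn [] = 0
  rw [Hw, smul_zero]

lemma toList_cons (x : Fin B.n) (u : FreeMonoid (Fin B.n)) :
    FreeMonoid.toList (FreeMonoid.of x * u) = x :: FreeMonoid.toList u :=
  FreeMonoid.toList_of_mul x u

lemma ofList_toList (u : FreeMonoid (Fin B.n)) :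
    FreeMonoid.ofList (FreeMonoid.toList u) = u := rfl

/-- L0: H(x·c) = (-1)^{deg x} x·H(c) for an old generator x. -/
lemma H_old_mul (x : Fin B.n) (hx : (x : ℕ) < A.n) (c : FAlg (Fin B.n)) :
    Hmap A B hn (fgen x * c) = sgn (B.deg x) • (fgen x * Hmap A B hn c) := by
  induction c using MonoidAlgebra.induction_linear with
  | zero => simp
  | add f g hf hg => rw [mul_add, map_add, hf, hg, map_add, mul_add, smul_add]
  | single m k =>
      show Hmap A B hn (fgen x * single m k)
        = sgn (B.deg x) • (fgen x * Hmap A B hn (single m k))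
      rw [fgen_mul_single, Hmap_single, Hmap_single, toList_cons]
      rw [Hw, if_pos hx]
      rw [mul_smul_comm, smul_comm]

/-- L1: H(e₁·c) = 0. -/
lemma H_e1_mul (c : FAlg (Fin B.n)) :
    Hmap A B hn (fgen (stabE1 A B hn) * c) = 0 := by
  induction c using MonoidAlgebra.induction_linear with
  | zero => rw [mul_zero, map_zero]
  | add f g hf hg => rw [mul_add, map_add, hf, hg, add_zero]
  | single m k =>
      show Hmap A B hn (fgen (stabE1 A B hn) * single m k) = 0
      rw [fgen_mul_single, Hmap_single, toList_cons]
      rw [Hw, if_neg (e1_not_old A B hn),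
        if_neg (e1_ne_e2 A B hn), smul_zero]

/-- L2: H(e₂·c) = e₁·c. -/
lemma H_e2_mul (c : FAlg (Fin B.n)) :
    Hmap A B hn (fgen (stabE2 A B hn) * c) = fgen (stabE1 A B hn) * c := by
  induction c using MonoidAlgebra.induction_linear with
  | zero => rw [mul_zero, map_zero, mul_zero]
  | add f g hf hg => rw [mul_add, map_add, hf, hg, mul_add]
  | single m k =>
      show Hmap A B hn (fgen (stabE2 A B hn) * single m k)
        = fgen (stabE1 A B hn) * single m k
      rw [fgen_mul_single, Hmap_single, toList_cons]
      rw [Hw, if_neg (e2_not_old A B hn), if_pos rfl, ofList_toList]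
      rw [single_smul m k, mul_smul_comm]

/-- LB1: word version of the H-multiplicativity over old elements. -/
lemma H_stab_word_mul (i : ℤ) (h : IsStabilizationWith A i B hn)
    (v : FreeMonoid (Fin A.n)) (c : FAlg (Fin B.n)) :
    Hmap A B hn (stabMap A B hn (single v 1) * c)
      = sgn (wdeg A.deg v) • (stabMap A B hn (single v 1) * Hmap A B hn c) := by
  induction v using FreeMonoid.recOn with
  | one =>
      rw [← one_def, stab_one, one_mul, one_mul, wdeg_one, sgn_zero, one_smul]
  | of_mul j v ih =>
      have hold : ((stabEmbFin A B hn j : Fin B.n) : ℕ) < A.n := by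
        rw [emb_val]; exact j.isLt
      have hdeg : B.deg (stabEmbFin A B hn j) = A.deg j := h.1 j
      rw [← fgen_mul_single, stab_mul, stab_fgen, mul_assoc,
        H_old_mul A B hn _ hold, ih, hdeg, wdeg_of_mul, sgn_add,
        mul_smul_comm, mul_assoc, ← mul_smul]

/-- LB: H(u·c) = (-1)^{d} u·H(c) for u the image of a homogeneous element
of degree d of A. -/
lemma H_stab_mul (i : ℤ) (h : IsStabilizationWith A i B hn)
    (d : ℤ) (u : FAlg (Fin A.n)) (hu : Homog A.deg d u) (c : FAlg (Fin B.n)) :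
    Hmap A B hn (stabMap A B hn u * c)
      = sgn d • (stabMap A B hn u * Hmap A B hn c) := by
  induction u using MonoidAlgebra.induction with
  | zero =>
      show Hmap A B hn (stabMap A B hn 0 * c)
        = sgn d • (stabMap A B hn 0 * Hmap A B hn c)
      rw [show stabMap A B hn 0 = 0 from MonoidAlgebra.mapDomain_zero _, zero_mul,
        map_zero, zero_mul, smul_zero]
  | single_add w b f hw hb ihf =>
      have hfw : f.coeff w = 0 := Finsupp.notMem_support_iff.mp hw
      have hwd : wdeg A.deg w = d := by
        apply hu
        rw [Finsupp.mem_support_iff]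
        simpa [hfw, MonoidAlgebra.coeff_add, MonoidAlgebra.coeff_single] using hb
      have hf : Homog A.deg d f := by
        intro v hv
        apply hu
        rw [Finsupp.mem_support_iff]
        have hvw : v ≠ w := by rintro rfl; exact hw hv
        have h1 : (Finsupp.single w b : FreeMonoid (Fin A.n) →₀ ℤ) v = 0 := Finsupp.single_eq_of_ne' (Ne.symm hvw)
        have h2 : f.coeff v ≠ 0 := Finsupp.mem_support_iff.mp hv
        simpa [MonoidAlgebra.coeff_add, h1] using h2
      have hadd : stabMap A B hn ((single w b + f : FAlg (Fin A.n)))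
          = stabMap A B hn (single w b) + stabMap A B hn f :=
        MonoidAlgebra.mapDomain_add _ _ _
      rw [hadd, add_mul, map_add, add_mul, smul_add, ihf hf]
      congr 1
      have h3 : (single w b : FAlg (Fin A.n)) = b • single w 1 :=
        single_smul w b
      have h4 : stabMap A B hn (b • single w 1) = b • stabMap A B hn (single w 1) :=
        MonoidAlgebra.mapDomain_smul _ b _
      rw [h3, h4, smul_mul_assoc, map_smul, H_stab_word_mul A B hn i h, hwd,
        smul_mul_assoc, smul_comm]

end Stab3
end StabProof
namespace StabProof
open MonoidAlgebra

section Stab4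
variable (A B : DGA) (hn : B.n = A.n + 2)

lemma Hmap_one' : Hmap A B hn 1 = 0 := by
  rw [one_def]; exact Hmap_one A B hn 1

/-- The homotopy identity, word version. -/
lemma homotopy_word (i : ℤ) (h : IsStabilizationWith A i B hn)
    (w : FreeMonoid (Fin B.n)) :
    B.D (Hmap A B hn (single w 1)) + Hmap A B hn (B.D (single w 1))
      = single w 1 - stabMap A B hn (piHom A B (single w 1)) := by
  induction w using FreeMonoid.recOn with
  | one =>
      rw [← one_def, Hmap_one', D_one, map_zero, map_zero, map_one, stab_one]
      simp
  | of_mul x u ih =>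
      set s : FAlg (Fin B.n) := single u 1 with hs
      rw [← fgen_mul_single]
      have hlei : B.D (fgen x * s)
          = B.D (fgen x) * s + sgn (B.deg x) • (fgen x * B.D s) :=
        B.leibniz (B.deg x) (fgen x) s (homog_fgen B.deg x)
      have hpis : stabMap A B hn (piHom A B (fgen x * s))
          = stabMap A B hn (piHom A B (fgen x)) * stabMap A B hn (piHom A B s) := by
        rw [map_mul, stab_mul]
      rcases gen_cases A B hn x with hx | hx | hx
      · -- old generator
        set j : Fin A.n := ⟨(x : ℕ), hx⟩ with hj
        have hxj : stabEmbFin A B hn j = x := emb_mk A B hn x hx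
        have hdeg : B.deg x = A.deg j := by rw [← hxj, h.1]
        have hDf : B.D (fgen x) = stabMap A B hn (A.D (fgen j)) := by
          rw [← hxj, ← stab_fgen, h.2.2.2.1]
        have hhom : Homog A.deg (A.deg j - 1) (A.D (fgen j)) :=
          A.lowers _ _ (homog_fgen A.deg j)
        have t1 : B.D (Hmap A B hn (fgen x * s))
            = sgn (B.deg x) • (B.D (fgen x) * Hmap A B hn s)
              + fgen x * B.D (Hmap A B hn s) := by
          rw [H_old_mul A B hn x hx, map_smul,
            B.leibniz (B.deg x) (fgen x) (Hmap A B hn s) (homog_fgen B.deg x),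
            smul_add, sgn_smul_sgn]
        have t2 : Hmap A B hn (B.D (fgen x * s))
            = -(sgn (B.deg x) • (B.D (fgen x) * Hmap A B hn s))
              + fgen x * Hmap A B hn (B.D s) := by
          rw [hlei, map_add, map_smul, H_old_mul A B hn x hx, sgn_smul_sgn,
            hDf, H_stab_mul A B hn i h _ _ hhom, ← hDf, sgn_sub_one, hdeg,
            neg_smul]
        rw [t1, t2]
        have t3 : stabMap A B hn (piHom A B (fgen x)) = fgen x := by
          rw [← hxj, pi_fgen_old, stab_fgen]
        rw [hpis, t3]
        have t4 : fgen x * s - fgen x * stabMap A B hn (piHom A B s)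
            = fgen x * (s - stabMap A B hn (piHom A B s)) := (mul_sub _ _ _).symm
        rw [t4, ← ih, mul_add]
        abel
      · -- e₁
        subst hx
        rw [H_e1_mul, map_zero, zero_add, hlei, h.2.2.2.2.1, map_add, map_smul,
          H_e2_mul, H_e1_mul, smul_zero, add_zero, hpis, pi_fgen_e1]
        have : stabMap A B hn 0 = 0 := MonoidAlgebra.mapDomain_zero _
        rw [this, zero_mul, sub_zero]
      · -- e₂
        subst hx
        have hsgn : sgn (B.deg (stabE1 A B hn)) = -sgn (B.deg (stabE2 A B hn)) := by
          rw [h.2.1, h.2.2.1, sgn_add]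
          have : sgn 1 = -1 := by simp [sgn]
          rw [this]; ring
        rw [H_e2_mul, hlei, h.2.2.2.2.2, zero_mul, zero_add, map_smul, H_e2_mul,
          B.leibniz (B.deg (stabE1 A B hn)) (fgen (stabE1 A B hn)) s
            (homog_fgen B.deg _), h.2.2.2.2.1, hsgn, hpis, pi_fgen_e2]
        have : stabMap A B hn 0 = 0 := MonoidAlgebra.mapDomain_zero _
        rw [this, zero_mul, sub_zero, add_assoc, ← add_smul, neg_add_cancel,
          zero_smul, add_zero]

/-- The homotopy identity. -/
lemma homotopy (i : ℤ) (h : IsStabilizationWith A i B hn) (b : FAlg (Fin B.n)) :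
    B.D (Hmap A B hn b) + Hmap A B hn (B.D b)
      = b - stabMap A B hn (piHom A B b) := by
  induction b using MonoidAlgebra.induction_linear with
  | zero =>
      have : stabMap A B hn 0 = 0 := MonoidAlgebra.mapDomain_zero _
      simp [this]
  | add f g hf hg =>
      have hsf : ∀ y z : FAlg (Fin A.n), stabMap A B hn (y + z)
          = stabMap A B hn y + stabMap A B hn z := fun _ _ => MonoidAlgebra.mapDomain_add _ _ _
      rw [map_add, map_add, map_add, map_add, map_add, hsf]
      rw [add_add_add_comm, hf, hg, sub_add_sub_comm]
  | single w c =>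
      show B.D (Hmap A B hn (single w c)) + Hmap A B hn (B.D (single w c))
        = single w c - stabMap A B hn (piHom A B (single w c))
      have hss : ∀ (y : FAlg (Fin A.n)), stabMap A B hn (c • y)
          = c • stabMap A B hn y := fun _ => MonoidAlgebra.mapDomain_smul _ c _
      rw [single_smul, map_smul, map_smul, map_smul, map_smul, map_smul, hss,
        ← smul_sub, ← smul_add, homotopy_word A B hn i h w]

end Stab4
end StabProof
open StabProof

/-- the inclusion `A → A * E^i` into the degree-`i` algebraic
stabilization induces an isomorphism on homology: it maps cycles to cycles, a
cycle of `A` mapping to a boundary is already a boundary (injectivity), and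
every cycle of the stabilization agrees with the image of a cycle of `A` up to
a boundary (surjectivity). -/
theorem stabilization_homology_iso (A B : DGA) (i : ℤ) (hn : B.n = A.n + 2)
    (h : IsStabilizationWith A i B hn) :
    (∀ a, A.D a = 0 → B.D (stabMap A B hn a) = 0) ∧
    (∀ a, A.D a = 0 → stabMap A B hn a ∈ LinearMap.range B.D →
      a ∈ LinearMap.range A.D) ∧
    (∀ b, B.D b = 0 → ∃ a, A.D a = 0 ∧
      b - stabMap A B hn a ∈ LinearMap.range B.D) := by
  refine ⟨?_, ?_, ?_⟩
  · intro a ha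
    rw [h.2.2.2.1, ha]
    exact MonoidAlgebra.mapDomain_zero _
  · intro a ha hmem
    obtain ⟨b, hb⟩ := LinearMap.mem_range.mp hmem
    refine LinearMap.mem_range.mpr ⟨piHom A B b, ?_⟩
    rw [← pi_chain A B hn i h b, hb, pi_stab]
  · intro b hb
    refine ⟨piHom A B b, ?_, ?_⟩
    · rw [← pi_chain A B hn i h b, hb, map_zero]
    · set c : FAlg (Fin B.n) := b - stabMap A B hn (piHom A B b) with hc
      refine LinearMap.mem_range.mpr ⟨Hmap A B hn c, ?_⟩
      have hz : stabMap A B hn (0 : FAlg (Fin A.n)) = 0 := MonoidAlgebra.mapDomain_zero _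
      have hDa : A.D (piHom A B b) = 0 := by
        rw [← pi_chain A B hn i h b, hb, map_zero]
      have h1 : B.D c = 0 := by
        rw [hc, map_sub, hb, h.2.2.2.1, hDa, hz, zero_sub,
          neg_zero]
      have h2 : piHom A B c = 0 := by
        rw [hc, map_sub, pi_stab, sub_self]
      have hkey := homotopy A B hn i h c
      rw [h1, map_zero, add_zero, h2, hz, sub_zero] at hkey
      exact hkey
end
end

section
/- The DGA E on two generators e₁, e₂ with deg e₁ = 1, deg e₂ = 0, ∂e₁ = e₂, ∂e₂ = 0, over ℤ, has homology concentrated in degree 0 isomorphic to ℤ (generated by the class of 1); in particular every cycle in E of positive degree is a boundary. -/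
/- Free unital associative ℤ-algebra on a type `X` of generators,
realized as the monoid algebra of the free monoid on `X`. -/
noncomputable section

/-- The grading of `E = ℤ⟨e₁, e₂⟩`: `deg e₁ = 1` (generator `true`) and
`deg e₂ = 0` (generator `false`). -/
def degE : Bool → ℤ := fun b => if b then 1 else 0

/-! ### Auxiliary constructions: contracting homotopy -/

/-- A single word as an element of the free algebra. -/
def sigmaw (w : FreeMonoid Bool) : FAlg Bool := MonoidAlgebra.single w 1

/-- The homotopy on words (given by their lists): kill words starting with `e₁`,
replace a leading `e₂` by `e₁`. -/
def hfunL : List Bool → FAlg Bool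
  | [] => 0
  | (true :: _) => 0
  | (false :: u) => MonoidAlgebra.single (FreeMonoid.ofList (true :: u)) 1

/-- The contracting homotopy as a linear map. -/
def hmap : FAlg Bool →ₗ[ℤ] FAlg Bool :=
  (Finsupp.lsum ℤ fun w => LinearMap.toSpanSingleton ℤ (FAlg Bool) (hfunL (FreeMonoid.toList w)))
    ∘ₗ (MonoidAlgebra.coeffLinearEquiv ℤ).toLinearMap

/-- Constant-term (counit) linear map. -/
def eps : FAlg Bool →ₗ[ℤ] ℤ :=
  Finsupp.lapply (1 : FreeMonoid Bool) ∘ₗ (MonoidAlgebra.coeffLinearEquiv ℤ).toLinearMap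

lemma hmap_single (w : FreeMonoid Bool) (c : ℤ) :
    hmap (MonoidAlgebra.single w c) = c • hfunL (FreeMonoid.toList w) := by
  rw [hmap, LinearMap.comp_apply]
  erw [Finsupp.lsum_single, LinearMap.toSpanSingleton_apply]

lemma fgen_mul_single (g : Bool) (w : FreeMonoid Bool) (c : ℤ) :
    fgen g * MonoidAlgebra.single w c = MonoidAlgebra.single (FreeMonoid.of g * w) c := by
  rw [fgen, MonoidAlgebra.of_apply, MonoidAlgebra.single_mul_single, one_mul]

lemma homog_fgen (g : Bool) : Homog degE (degE g) (fgen g) := by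
  intro w hw
  rw [fgen, MonoidAlgebra.of_apply, MonoidAlgebra.coeff_single] at hw
  have : w = FreeMonoid.of g := by
    have := Finsupp.support_single_ne_zero (FreeMonoid.of g) (one_ne_zero (α := ℤ))
    rw [this] at hw
    simpa using hw
  subst this
  simp [wdeg, FreeMonoid.toList_of]

lemma homog_one : Homog degE 0 (1 : FAlg Bool) := by
  intro w hw
  rw [MonoidAlgebra.one_def, MonoidAlgebra.coeff_single] at hw
  have : w = (1 : FreeMonoid Bool) := by
    have := Finsupp.support_single_ne_zero (1 : FreeMonoid Bool) (one_ne_zero (α := ℤ))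
    rw [this] at hw
    simpa using hw
  subst this
  simp [wdeg, FreeMonoid.toList_one]

lemma sgn_zero : sgn 0 = 1 := by simp [sgn]
lemma sgn_one : sgn 1 = -1 := by simp [sgn]

lemma hmap_true_mul (z : FAlg Bool) : hmap (fgen true * z) = 0 := by
  induction z using MonoidAlgebra.induction_linear with
  | zero => simp
  | add f g hf hg => rw [mul_add, map_add, hf, hg, add_zero]
  | single w c =>
    rw [fgen_mul_single, hmap_single,
      FreeMonoid.toList_of_mul]
    simp [hfunL]

lemma hmap_false_mul (z : FAlg Bool) : hmap (fgen false * z) = fgen true * z := by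
  induction z using MonoidAlgebra.induction_linear with
  | zero => simp
  | add f g hf hg => rw [mul_add, map_add, hf, hg, mul_add]
  | single w c =>
    rw [fgen_mul_single, fgen_mul_single, hmap_single,
      FreeMonoid.toList_of_mul]
    simp only [hfunL]
    rw [MonoidAlgebra.smul_single, smul_eq_mul, mul_one]
    congr 1

lemma of_mul_ne_one (g : Bool) (w : FreeMonoid Bool) : FreeMonoid.of g * w ≠ 1 := by
  intro h
  have := congrArg FreeMonoid.toList h
  rw [FreeMonoid.toList_of_mul, FreeMonoid.toList_one] at this
  exact List.cons_ne_nil _ _ this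

lemma eps_mul (g : Bool) (z : FAlg Bool) : eps (fgen g * z) = 0 := by
  induction z using MonoidAlgebra.induction_linear with
  | zero => simp
  | add f g hf hg => rw [mul_add, map_add, hf, hg, add_zero]
  | single w c =>
    rw [fgen_mul_single]
    exact Finsupp.single_eq_of_ne' (of_mul_ne_one g w)

lemma eps_one : eps (1 : FAlg Bool) = 1 := by
  rw [eps, MonoidAlgebra.one_def]
  exact Finsupp.single_eq_same (a := (1 : FreeMonoid Bool)) (b := (1 : ℤ))

section Main

variable (D : FAlg Bool →ₗ[ℤ] FAlg Bool)

lemma D_one (hLeib : IsLeibniz degE D) : D 1 = 0 := by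
  have h := hLeib 0 1 1 homog_one
  rw [mul_one, mul_one, one_mul, sgn_zero, one_smul] at h
  exact (left_eq_add.mp h)

lemma D_word (hLeib : IsLeibniz degE D) (g : Bool) (u : FreeMonoid Bool) :
    D (sigmaw (FreeMonoid.of g * u)) =
      D (fgen g) * sigmaw u + sgn (degE g) • (fgen g * D (sigmaw u)) := by
  rw [sigmaw, ← fgen_mul_single]
  exact hLeib (degE g) _ _ (homog_fgen g)

lemma homotopy_single (hLeib : IsLeibniz degE D)
    (he1 : D (fgen true) = fgen false) (he2 : D (fgen false) = 0) (w : FreeMonoid Bool) :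
    D (hmap (sigmaw w)) + hmap (D (sigmaw w)) + eps (sigmaw w) • 1 = sigmaw w := by
  rw [← FreeMonoid.ofList_toList w]
  rcases FreeMonoid.toList w with _ | ⟨g, u⟩
  · have h1 : sigmaw (FreeMonoid.ofList []) = (1 : FAlg Bool) := by
      rw [sigmaw, MonoidAlgebra.one_def]; rfl
    rw [h1, D_one D hLeib]
    have h2 : hmap (1 : FAlg Bool) = 0 := by
      rw [MonoidAlgebra.one_def, hmap_single, FreeMonoid.toList_one]
      simp [hfunL]
    rw [h2, map_zero, map_zero, eps_one, one_smul, zero_add, zero_add]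
  · have hcons : FreeMonoid.ofList (g :: u) = FreeMonoid.of g * FreeMonoid.ofList u := rfl
    set u' := FreeMonoid.ofList u with hu'
    have hσmul : ∀ b : Bool, sigmaw (FreeMonoid.of b * u') = fgen b * sigmaw u' := by
      intro b; rw [sigmaw, sigmaw, fgen_mul_single]
    have hDtrue : D (fgen true * sigmaw u') =
        fgen false * sigmaw u' - fgen true * D (sigmaw u') := by
      rw [hLeib 1 (fgen true) (sigmaw u') (by simpa [degE] using homog_fgen true), he1,
        sgn_one, neg_smul, one_smul, sub_eq_add_neg]
    have hDfalse : D (fgen false * sigmaw u') = fgen false * D (sigmaw u') := by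
      rw [hLeib 0 (fgen false) (sigmaw u') (by simpa [degE] using homog_fgen false), he2,
        sgn_zero, one_smul, zero_mul, zero_add]
    rcases g with _ | _
    · -- g = false
      rw [hcons, hσmul, hmap_false_mul, hDtrue, hDfalse, hmap_false_mul, eps_mul,
        zero_smul, add_zero]
      abel
    · -- g = true
      rw [hcons, hσmul, hmap_true_mul, map_zero, zero_add, hDtrue, map_sub,
        hmap_false_mul, hmap_true_mul, sub_zero, eps_mul, zero_smul, add_zero]

lemma epsD_single (hLeib : IsLeibniz degE D)
    (he1 : D (fgen true) = fgen false) (he2 : D (fgen false) = 0) (w : FreeMonoid Bool) :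
    eps (D (sigmaw w)) = 0 := by
  rw [← FreeMonoid.ofList_toList w]
  rcases FreeMonoid.toList w with _ | ⟨g, u⟩
  · have h1 : sigmaw (FreeMonoid.ofList []) = (1 : FAlg Bool) := by
      rw [sigmaw, MonoidAlgebra.one_def]; rfl
    rw [h1, D_one D hLeib, map_zero]
  · have hcons : FreeMonoid.ofList (g :: u) = FreeMonoid.of g * FreeMonoid.ofList u := rfl
    rw [hcons, D_word D hLeib, map_add, map_smul, eps_mul, smul_zero, add_zero]
    rcases g with _ | _
    · rw [he2, zero_mul, map_zero]
    · rw [he1]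
      exact eps_mul false _

end Main

/-- the DGA `E` on two generators `e₁, e₂` with `deg e₁ = 1`,
`deg e₂ = 0`, `∂e₁ = e₂`, `∂e₂ = 0` has homology concentrated in degree 0 and
isomorphic to ℤ, generated by the class of `1`: every degree-0 cycle is an
integer multiple of `1` plus a boundary, `c • 1` is a boundary only for
`c = 0`, and every cycle of positive degree is a boundary. -/
theorem E_homology
    (D : FAlg Bool →ₗ[ℤ] FAlg Bool)
    (hLeib : IsLeibniz degE D) (hLow : LowersDeg degE D)
    (he1 : D (fgen true) = fgen false) (he2 : D (fgen false) = 0) :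
    (∀ a : FAlg Bool, Homog degE 0 a → D a = 0 →
        ∃ (c : ℤ) (b : FAlg Bool), a = c • (1 : FAlg Bool) + D b) ∧
    (∀ c : ℤ, (∃ b, D b = c • (1 : FAlg Bool)) → c = 0) ∧
    (∀ d : ℤ, 0 < d → ∀ a : FAlg Bool, Homog degE d a → D a = 0 →
        ∃ b, a = D b) := by
  have hsingle_smul : ∀ (w : FreeMonoid Bool) (c : ℤ),
      (MonoidAlgebra.single w c : FAlg Bool) = c • sigmaw w := by
    intro w c
    rw [sigmaw]
    rw [MonoidAlgebra.smul_single, smul_eq_mul, mul_one]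
  have key : ∀ a : FAlg Bool, D (hmap a) + hmap (D a) + eps a • 1 = a := by
    intro a
    induction a using MonoidAlgebra.induction_linear with
    | zero => simp
    | add f g hf hg =>
      rw [map_add, map_add, map_add, map_add, map_add, add_smul]
      conv_rhs => rw [← hf, ← hg]
      abel
    | single w c =>
      rw [hsingle_smul w c, map_smul, map_smul, map_smul, map_smul, map_smul,
        smul_eq_mul, mul_smul, ← smul_add, ← smul_add,
        homotopy_single D hLeib he1 he2 w]
  have keyD : ∀ a : FAlg Bool, eps (D a) = 0 := by
    intro a
    induction a using MonoidAlgebra.induction_linear with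
    | zero => simp
    | add f g hf hg => rw [map_add, map_add, hf, hg, add_zero]
    | single w c =>
      rw [hsingle_smul w c, map_smul, map_smul, epsD_single D hLeib he1 he2 w, smul_zero]
  refine ⟨?_, ?_, ?_⟩
  · intro a _ hDa
    refine ⟨eps a, hmap a, ?_⟩
    have h := key a
    rw [hDa, map_zero, add_zero, add_comm] at h
    exact h.symm
  · rintro c ⟨b, hb⟩
    have h := keyD b
    rw [hb, map_smul, eps_one, smul_eq_mul, mul_one] at h
    exact h
  · intro d hd a ha hDa
    have heps : eps a = 0 := by
      by_contra hne
      have h1 : (1 : FreeMonoid Bool) ∈ a.coeff.support := Finsupp.mem_support_iff.mpr hne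
      have h2 := ha 1 h1
      rw [wdeg, FreeMonoid.toList_one] at h2
      simp only [List.map_nil, List.sum_nil] at h2
      omega
    have h := key a
    rw [hDa, map_zero, add_zero, heps, zero_smul, add_zero] at h
    exact ⟨hmap a, h.symm⟩
end
end

section
/- A stabilization changes the characteristic algebra by freely adjoining one generator: if (A', ∂') is the degree-i algebraic stabilization of (A, ∂) with new generators e₁, e₂, then the characteristic algebra C(A') is isomorphic to the free product C(A) * ℤ⟨e₁⟩. -/
/- Free unital associative ℤ-algebra on a type `X` of generators,
realized as the monoid algebra of the free monoid on `X`. -/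
noncomputable section

/-- The relation whose `RingQuot` is the quotient of `A` by the two-sided ideal
generated by the differentials of the generators: the characteristic algebra. -/
def charRel (A : DGA) (a b : FAlg (Fin A.n)) : Prop :=
  b = 0 ∧ ∃ i : Fin A.n, a = A.D (fgen i)

/-- The characteristic algebra `C(A) = A / I`, `I` the two-sided ideal generated
by the `∂aᵢ`. -/
abbrev CharAlg (A : DGA) : Type := RingQuot (charRel A)

/-- The characteristic algebra with `d` extra free generators adjoined (and no
new relations): the free algebra on `A.n + d` generators modulo the two-sided
ideal generated by the (images of the) differentials of the original generators. -/
def charExtRel (A : DGA) (d : ℕ) (a b : FAlg (Fin (A.n + d))) : Prop :=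
  b = 0 ∧ ∃ i : Fin A.n,
    a = MonoidAlgebra.mapDomain (⇑(FreeMonoid.map (Fin.castAdd d))) (A.D (fgen i))

abbrev CharExtAlg (A : DGA) (d : ℕ) : Type := RingQuot (charExtRel A d)

section AuxStab

variable {X : Type} {S : Type} [Semiring S] [Algebra ℤ S]

/-- Lift of a map on generators to an algebra hom out of the free algebra. -/
def falgLift (f : X → S) : FAlg X →ₐ[ℤ] S :=
  MonoidAlgebra.lift ℤ S (FreeMonoid X) (FreeMonoid.lift f)

@[simp] lemma falgLift_gen (f : X → S) (x : X) : falgLift f (fgen x) = f x := by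
  simp [falgLift, fgen, MonoidAlgebra.lift_of, FreeMonoid.lift_eval_of]

lemma falg_hom_ext {φ ψ : FAlg X →ₐ[ℤ] S} (h : ∀ x, φ (fgen x) = ψ (fgen x)) : φ = ψ := by
  apply MonoidAlgebra.algHom_ext'
  apply FreeMonoid.hom_eq
  intro x
  simpa [fgen] using h x
  exact Subsingleton.elim _ _

@[simp] lemma mapDomainAlgHom_fgen {Y : Type} (f : X → Y) (x : X) :
    MonoidAlgebra.mapDomainAlgHom ℤ ℤ (FreeMonoid.map f) (fgen x) = fgen (f x) := by
  simp [fgen, MonoidAlgebra.of_apply, MonoidAlgebra.mapDomainAlgHom,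
    MonoidAlgebra.mapDomainRingHom, Finsupp.mapDomain_single, FreeMonoid.map_of]

lemma stabMap_eq (A B : DGA) (hn : B.n = A.n + 2) (x : FAlg (Fin A.n)) :
    stabMap A B hn x
      = MonoidAlgebra.mapDomainAlgHom ℤ ℤ (FreeMonoid.map (stabEmbFin A B hn)) x :=
  rfl

lemma stabMap_fgen (A B : DGA) (hn : B.n = A.n + 2) (j : Fin A.n) :
    stabMap A B hn (fgen j) = fgen (stabEmbFin A B hn j) := by
  rw [stabMap_eq, mapDomainAlgHom_fgen]

@[simp] lemma stabEmbFin_val (A B : DGA) (hn : B.n = A.n + 2) (j : Fin A.n) :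
    ((stabEmbFin A B hn j : Fin B.n) : ℕ) = (j : ℕ) := rfl

@[simp] lemma stabE1_val (A B : DGA) (hn : B.n = A.n + 2) :
    ((stabE1 A B hn : Fin B.n) : ℕ) = A.n := rfl

@[simp] lemma stabE2_val (A B : DGA) (hn : B.n = A.n + 2) :
    ((stabE2 A B hn : Fin B.n) : ℕ) = A.n + 1 := rfl

/-- Generator images for the forward map `FAlg (Fin B.n) → C(A) * ℤ⟨e₁⟩`. -/
def genF (A B : DGA) (hn : B.n = A.n + 2) (k : Fin B.n) : CharExtAlg A 1 :=
  if h : (k : ℕ) ≤ A.n then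
    RingQuot.mkAlgHom ℤ (charExtRel A 1) (fgen (⟨(k : ℕ), by omega⟩ : Fin (A.n + 1)))
  else 0

def f0 (A B : DGA) (hn : B.n = A.n + 2) : FAlg (Fin B.n) →ₐ[ℤ] CharExtAlg A 1 :=
  falgLift (genF A B hn)

/-- Generator images for the backward map `FAlg (Fin (A.n+1)) → C(B)`. -/
def genG (A B : DGA) (hn : B.n = A.n + 2) (j : Fin (A.n + 1)) : CharAlg B :=
  if h : (j : ℕ) < A.n then
    RingQuot.mkAlgHom ℤ (charRel B) (fgen (stabEmbFin A B hn ⟨(j : ℕ), h⟩))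
  else RingQuot.mkAlgHom ℤ (charRel B) (fgen (stabE1 A B hn))

def g0 (A B : DGA) (hn : B.n = A.n + 2) : FAlg (Fin (A.n + 1)) →ₐ[ℤ] CharAlg B :=
  falgLift (genG A B hn)

lemma f0_stabMap (A B : DGA) (hn : B.n = A.n + 2) (x : FAlg (Fin A.n)) :
    f0 A B hn (stabMap A B hn x)
      = RingQuot.mkAlgHom ℤ (charExtRel A 1)
          (MonoidAlgebra.mapDomain (⇑(FreeMonoid.map (Fin.castAdd 1))) x) := by
  have key : (f0 A B hn).comp
        (MonoidAlgebra.mapDomainAlgHom ℤ ℤ (FreeMonoid.map (stabEmbFin A B hn)))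
      = (RingQuot.mkAlgHom ℤ (charExtRel A 1)).comp
        (MonoidAlgebra.mapDomainAlgHom ℤ ℤ (FreeMonoid.map (Fin.castAdd 1))) := by
    apply falg_hom_ext
    intro j
    have hj : (j : ℕ) < A.n := j.isLt
    simp only [AlgHom.comp_apply, mapDomainAlgHom_fgen, f0, falgLift_gen, genF]
    rw [dif_pos (by simpa using hj.le)]
    congr 1
  have := congrArg (fun F => F x) key
  simpa [stabMap_eq, AlgHom.comp_apply] using this

lemma f0_rel (A B : DGA) (i : ℤ) (hn : B.n = A.n + 2)
    (hs : IsStabilizationWith A i B hn) :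
    ∀ ⦃a b : FAlg (Fin B.n)⦄, charRel B a b → f0 A B hn a = f0 A B hn b := by
  obtain ⟨-, -, -, hcomm, hDe1, hDe2⟩ := hs
  rintro a b ⟨rfl, k, rfl⟩
  rw [map_zero]
  have hk2 : (k : ℕ) < A.n + 2 := by have := k.isLt; omega
  rcases lt_or_ge (k : ℕ) A.n with hk | hk
  · have hkk : k = stabEmbFin A B hn ⟨(k : ℕ), hk⟩ := by
      apply Fin.ext; simp
    rw [hkk, ← stabMap_fgen, hcomm, f0_stabMap]
    rw [RingQuot.mkAlgHom_rel ℤ (show charExtRel A 1 _ 0 from ⟨rfl, ⟨(k : ℕ), hk⟩, rfl⟩)]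
    exact map_zero _
  · rcases Nat.eq_or_lt_of_le hk with hk1 | hk1
    · have hkk : k = stabE1 A B hn := by apply Fin.ext; simp [← hk1]
      rw [hkk, hDe1]
      simp only [f0, falgLift_gen, genF]
      rw [dif_neg (by simp)]
    · have hkk : k = stabE2 A B hn := by apply Fin.ext; simp; omega
      rw [hkk, hDe2, map_zero]

lemma g0_rel (A B : DGA) (i : ℤ) (hn : B.n = A.n + 2)
    (hs : IsStabilizationWith A i B hn) :
    ∀ ⦃a b : FAlg (Fin (A.n + 1))⦄, charExtRel A 1 a b → g0 A B hn a = g0 A B hn b := by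
  obtain ⟨-, -, -, hcomm, hDe1, hDe2⟩ := hs
  rintro a b ⟨rfl, j, rfl⟩
  rw [map_zero]
  have key : (g0 A B hn).comp
        (MonoidAlgebra.mapDomainAlgHom ℤ ℤ (FreeMonoid.map (Fin.castAdd (n := A.n) 1)))
      = (RingQuot.mkAlgHom ℤ (charRel B)).comp
        (MonoidAlgebra.mapDomainAlgHom ℤ ℤ (FreeMonoid.map (stabEmbFin A B hn))) := by
    apply falg_hom_ext
    intro l
    have hl : (l : ℕ) < A.n := l.isLt
    simp only [AlgHom.comp_apply, mapDomainAlgHom_fgen, g0, falgLift_gen, genG]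
    rw [dif_pos (by simpa using hl)]
    congr 2
  have := congrArg (fun F => F (A.D (fgen j))) key
  simp only [AlgHom.comp_apply] at this
  rw [show (MonoidAlgebra.mapDomainAlgHom ℤ ℤ
        (FreeMonoid.map (Fin.castAdd (n := A.n) 1))) (A.D (fgen j))
      = MonoidAlgebra.mapDomain (⇑(FreeMonoid.map (Fin.castAdd 1))) (A.D (fgen j)) from rfl] at this
  rw [this, ← stabMap_eq, ← hcomm, stabMap_fgen]
  exact (RingQuot.mkAlgHom_rel ℤ
    (show charRel B _ 0 from ⟨rfl, stabEmbFin A B hn j, rfl⟩)).trans (map_zero _)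

end AuxStab

/-- a stabilization changes the characteristic algebra by freely
adjoining one generator: if `B` is the degree-`i` algebraic stabilization of
`A` (with new generators `e₁, e₂`), then `C(B)` is isomorphic to `C(A)` with
one free generator adjoined, i.e. to the free product `C(A) * ℤ⟨e₁⟩`. -/
theorem stabilization_char_algebra (A B : DGA) (i : ℤ)
    (h : IsStabilization A i B) :
    Nonempty (CharAlg B ≃+* CharExtAlg A 1) := by
  obtain ⟨hn, hs⟩ := h
  let F : CharAlg B →ₐ[ℤ] CharExtAlg A 1 :=
    RingQuot.liftAlgHom ℤ ⟨f0 A B hn, f0_rel A B i hn hs⟩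
  let G : CharExtAlg A 1 →ₐ[ℤ] CharAlg B :=
    RingQuot.liftAlgHom ℤ ⟨g0 A B hn, g0_rel A B i hn hs⟩
  have hF : ∀ x, F (RingQuot.mkAlgHom ℤ (charRel B) x) = f0 A B hn x := fun x =>
    RingQuot.liftAlgHom_mkAlgHom_apply ℤ _ _ x
  have hG : ∀ x, G (RingQuot.mkAlgHom ℤ (charExtRel A 1) x) = g0 A B hn x := fun x =>
    RingQuot.liftAlgHom_mkAlgHom_apply ℤ _ _ x
  have he2zero : RingQuot.mkAlgHom ℤ (charRel B) (fgen (stabE2 A B hn)) = 0 := by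
    rw [← hs.2.2.2.2.1]
    exact (RingQuot.mkAlgHom_rel ℤ
      (show charRel B _ 0 from ⟨rfl, stabE1 A B hn, rfl⟩)).trans (map_zero _)
  have hGF : G.comp F = AlgHom.id ℤ (CharAlg B) := by
    apply RingQuot.ringQuot_ext'
    apply falg_hom_ext
    intro k
    simp only [AlgHom.comp_apply, AlgHom.id_apply]
    rw [hF]
    have hk2 : (k : ℕ) < A.n + 2 := by have := k.isLt; omega
    simp only [f0, falgLift_gen, genF]
    by_cases hk : (k : ℕ) ≤ A.n
    · rw [dif_pos hk, hG]
      simp only [g0, falgLift_gen, genG]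
      rcases lt_or_eq_of_le hk with hk1 | hk1
      · rw [dif_pos (by simpa using hk1)]
        exact congrArg _ (congrArg fgen (Fin.ext (by simp)))
      · rw [dif_neg (by simp [← hk1])]
        exact congrArg _ (congrArg fgen (Fin.ext (by simp [hk1])))
    · rw [dif_neg hk, map_zero]
      have hkk : k = stabE2 A B hn := Fin.ext (by simp [stabE2_val]; omega)
      rw [hkk, he2zero]
  have hFG : F.comp G = AlgHom.id ℤ (CharExtAlg A 1) := by
    apply RingQuot.ringQuot_ext'
    apply falg_hom_ext
    intro j
    simp only [AlgHom.comp_apply, AlgHom.id_apply]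
    rw [hG]
    simp only [g0, falgLift_gen, genG]
    by_cases hj : (j : ℕ) < A.n
    · rw [dif_pos hj, hF]
      simp only [f0, falgLift_gen, genF]
      rw [dif_pos (by simp; omega)]
      exact congrArg _ (congrArg fgen (Fin.ext (by simp)))
    · rw [dif_neg hj, hF]
      simp only [f0, falgLift_gen, genF]
      rw [dif_pos (by simp)]
      have := j.isLt
      exact congrArg _ (congrArg fgen (Fin.ext (by simp; omega)))
  refine ⟨(AlgEquiv.ofAlgHom F G hFG hGF).toRingEquiv⟩
end
end

section
/- Tame isomorphisms preserve the characteristic algebra ideal membership: if φ : (A₁, ∂₁) → (A₂, ∂₂) is a graded chain algebra isomorphism between DGAs with generating sets {aᵢ¹} and {aᵢ²}, then φ maps the two-sided ideal I₁ generated by {∂₁ aᵢ¹} onto the two-sided ideal I₂ generated by {∂₂ aᵢ²}, and hence induces an algebra isomorphism C(A₁) ≅ C(A₂) of characteristic algebras. -/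
/- Free unital associative ℤ-algebra on a type `X` of generators,
realized as the monoid algebra of the free monoid on `X`. -/
noncomputable section

-- lemmas
lemma homog_one_s10 {X : Type} (deg : X → ℤ) : Homog deg 0 (1 : FAlg X) := by
  intro w hw
  have : w = 1 := by
    have := Finsupp.support_single_subset (a := (1 : FreeMonoid X)) (b := (1 : ℤ)) hw
    simpa using this
  subst this
  rfl

lemma homog_fgen_s10 {X : Type} (deg : X → ℤ) (x : X) : Homog deg (deg x) (fgen x) := by
  intro w hw
  have : w = FreeMonoid.of x := by
    have := Finsupp.support_single_subset (a := (FreeMonoid.of x)) (b := (1 : ℤ)) hw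
    simpa using this
  subst this
  simp [wdeg]

lemma D_one_s10 (A : DGA) : A.D 1 = 0 := by
  have h := A.leibniz 0 1 1 (homog_one_s10 _)
  simpa [sgn] using h

lemma D_mem_span (A : DGA) (a : FAlg (Fin A.n)) :
    A.D a ∈ TwoSidedIdeal.span {b : FAlg (Fin A.n) | ∃ i, b = A.D (fgen i)} := by
  set I := TwoSidedIdeal.span {b : FAlg (Fin A.n) | ∃ i, b = A.D (fgen i)} with hI
  have hword : ∀ l : List (Fin A.n),
      A.D (MonoidAlgebra.of ℤ (FreeMonoid (Fin A.n)) (FreeMonoid.ofList l)) ∈ I := by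
    intro l
    induction l with
    | nil =>
        have : (FreeMonoid.ofList ([] : List (Fin A.n))) = 1 := rfl
        rw [this, map_one, D_one_s10]
        exact zero_mem I
    | cons x l ih =>
        have hsplit : FreeMonoid.ofList (x :: l) =
            FreeMonoid.of x * FreeMonoid.ofList l := rfl
        rw [hsplit, map_mul]
        have hleib := A.leibniz (A.deg x) (fgen x)
          (MonoidAlgebra.of ℤ (FreeMonoid (Fin A.n)) (FreeMonoid.ofList l))
          (homog_fgen_s10 _ x)
        rw [show MonoidAlgebra.of ℤ (FreeMonoid (Fin A.n)) (FreeMonoid.of x) = fgen x from rfl,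
          hleib]
        refine add_mem ?_ ?_
        · exact TwoSidedIdeal.mul_mem_right _ _ _ (TwoSidedIdeal.subset_span ⟨x, rfl⟩)
        · exact zsmul_mem (TwoSidedIdeal.mul_mem_left _ _ _ ih) _
  induction a using MonoidAlgebra.induction_linear with
  | zero => rw [map_zero]; exact zero_mem I
  | add f g hf hg => rw [map_add]; exact add_mem hf hg
  | single w c =>
      have : (MonoidAlgebra.single w c : FAlg (Fin A.n)) = c • MonoidAlgebra.of ℤ _ w := by
        simp [MonoidAlgebra.of_apply, Finsupp.smul_single]
      rw [this, map_smul]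
      exact zsmul_mem (hword (FreeMonoid.toList w)) c

/-- a graded chain algebra isomorphism `φ : (A, ∂₁) → (B, ∂₂)`
maps the two-sided ideal `I₁` generated by the `∂₁ aᵢ` onto the two-sided
ideal `I₂` generated by the `∂₂ aᵢ`, and hence induces an isomorphism
`C(A) ≅ C(B)` of characteristic algebras. -/
theorem chain_iso_char_iso (A B : DGA)
    (φ : FAlg (Fin A.n) ≃ₐ[ℤ] FAlg (Fin B.n))
    (hgr : ∀ (d : ℤ) (v : FAlg (Fin A.n)), Homog A.deg d v → Homog B.deg d (φ v))
    (hchain : ∀ a, φ (A.D a) = B.D (φ a)) :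
    (∀ x ∈ TwoSidedIdeal.span {a : FAlg (Fin A.n) | ∃ i, a = A.D (fgen i)},
        φ x ∈ TwoSidedIdeal.span {b : FAlg (Fin B.n) | ∃ i, b = B.D (fgen i)}) ∧
    (∀ y ∈ TwoSidedIdeal.span {b : FAlg (Fin B.n) | ∃ i, b = B.D (fgen i)},
        φ.symm y ∈ TwoSidedIdeal.span {a : FAlg (Fin A.n) | ∃ i, a = A.D (fgen i)}) ∧
    ∃ e : CharAlg A ≃+* CharAlg B,
      ∀ a, e (RingQuot.mkRingHom (charRel A) a)
            = RingQuot.mkRingHom (charRel B) (φ a) := by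
  have hchain' : ∀ b, φ.symm (B.D b) = A.D (φ.symm b) := by
    intro b
    apply φ.injective
    rw [hchain, AlgEquiv.apply_symm_apply, AlgEquiv.apply_symm_apply]
  set S₁ : Set (FAlg (Fin A.n)) := {a | ∃ i, a = A.D (fgen i)}
  set S₂ : Set (FAlg (Fin B.n)) := {b | ∃ i, b = B.D (fgen i)}
  have fwd : ∀ x ∈ TwoSidedIdeal.span S₁, φ x ∈ TwoSidedIdeal.span S₂ := by
    intro x hx
    have h := TwoSidedIdeal.mem_span_iff.mp hx
      ((TwoSidedIdeal.span S₂).comap (φ : FAlg (Fin A.n) →+* FAlg (Fin B.n)))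
    rw [TwoSidedIdeal.mem_comap] at h
    apply h
    rintro a ⟨i, rfl⟩
    rw [SetLike.mem_coe, TwoSidedIdeal.mem_comap]
    show φ (A.D (fgen i)) ∈ _
    rw [hchain]
    exact D_mem_span B _
  have bwd : ∀ y ∈ TwoSidedIdeal.span S₂, φ.symm y ∈ TwoSidedIdeal.span S₁ := by
    intro y hy
    have h := TwoSidedIdeal.mem_span_iff.mp hy
      ((TwoSidedIdeal.span S₁).comap (φ.symm : FAlg (Fin B.n) →+* FAlg (Fin A.n)))
    rw [TwoSidedIdeal.mem_comap] at h
    apply h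
    rintro b ⟨i, rfl⟩
    rw [SetLike.mem_coe, TwoSidedIdeal.mem_comap]
    show φ.symm (B.D (fgen i)) ∈ _
    rw [hchain']
    exact D_mem_span A _
  refine ⟨fwd, bwd, ?_⟩
  have mkzeroB : ∀ x ∈ TwoSidedIdeal.span S₂, RingQuot.mkRingHom (charRel B) x = 0 := by
    intro x hx
    have h := TwoSidedIdeal.mem_span_iff.mp hx
      (TwoSidedIdeal.ker (RingQuot.mkRingHom (charRel B)))
    rw [TwoSidedIdeal.mem_ker] at h
    apply h
    rintro b ⟨i, rfl⟩
    rw [SetLike.mem_coe, TwoSidedIdeal.mem_ker, ← map_zero (RingQuot.mkRingHom (charRel B))]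
    exact RingQuot.mkRingHom_rel ⟨rfl, i, rfl⟩
  have mkzeroA : ∀ x ∈ TwoSidedIdeal.span S₁, RingQuot.mkRingHom (charRel A) x = 0 := by
    intro x hx
    have h := TwoSidedIdeal.mem_span_iff.mp hx
      (TwoSidedIdeal.ker (RingQuot.mkRingHom (charRel A)))
    rw [TwoSidedIdeal.mem_ker] at h
    apply h
    rintro b ⟨i, rfl⟩
    rw [SetLike.mem_coe, TwoSidedIdeal.mem_ker, ← map_zero (RingQuot.mkRingHom (charRel A))]
    exact RingQuot.mkRingHom_rel ⟨rfl, i, rfl⟩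
  have hf : ∀ ⦃a b : FAlg (Fin A.n)⦄, charRel A a b →
      ((RingQuot.mkRingHom (charRel B)).comp (φ : FAlg (Fin A.n) →+* FAlg (Fin B.n))) a
        = ((RingQuot.mkRingHom (charRel B)).comp (φ : FAlg (Fin A.n) →+* FAlg (Fin B.n))) b := by
    rintro a b ⟨rfl, i, rfl⟩
    simp only [RingHom.comp_apply, map_zero]
    show RingQuot.mkRingHom (charRel B) (φ (A.D (fgen i))) = 0
    rw [hchain]
    exact mkzeroB _ (D_mem_span B _)
  have hg : ∀ ⦃a b : FAlg (Fin B.n)⦄, charRel B a b →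
      ((RingQuot.mkRingHom (charRel A)).comp (φ.symm : FAlg (Fin B.n) →+* FAlg (Fin A.n))) a
        = ((RingQuot.mkRingHom (charRel A)).comp (φ.symm : FAlg (Fin B.n) →+* FAlg (Fin A.n))) b := by
    rintro a b ⟨rfl, i, rfl⟩
    simp only [RingHom.comp_apply, map_zero]
    show RingQuot.mkRingHom (charRel A) (φ.symm (B.D (fgen i))) = 0
    rw [hchain']
    exact mkzeroA _ (D_mem_span A _)
  set F : CharAlg A →+* CharAlg B := RingQuot.lift ⟨_, hf⟩
  set G : CharAlg B →+* CharAlg A := RingQuot.lift ⟨_, hg⟩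
  have hF : ∀ a, F (RingQuot.mkRingHom (charRel A) a)
      = RingQuot.mkRingHom (charRel B) (φ a) := fun a =>
    RingQuot.lift_mkRingHom_apply _ hf a
  have hG : ∀ b, G (RingQuot.mkRingHom (charRel B) b)
      = RingQuot.mkRingHom (charRel A) (φ.symm b) := fun b =>
    RingQuot.lift_mkRingHom_apply _ hg b
  have hGF : G.comp F = RingHom.id _ := by
    apply RingQuot.ringQuot_ext
    refine RingHom.ext fun a => ?_
    simp [RingHom.comp_apply, hF, hG]
  have hFG : F.comp G = RingHom.id _ := by
    apply RingQuot.ringQuot_ext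
    refine RingHom.ext fun b => ?_
    simp [RingHom.comp_apply, hF, hG]
  exact ⟨RingEquiv.ofRingHom F G (by exact hFG) (by exact hGF), hF⟩
end
end

section
/- With notation as for the degree-1 generators, define degree-2 generators a₂₂(x,y) with ∂a₂₂(x,y) = μ a₁₂(u⁻ₓ, y) + a₁₂(u⁺ₓ, y) − a₁₁(u⁻ₓ, oₓ) a₁₂(oₓ, y) + a₂₁(x, u⁻ᵧ) + μ a₂₁(x, u⁺ᵧ) − a₂₁(x, oᵧ) a₁₁(oᵧ, u⁻ᵧ). Then ∂(∂a₂₂(x,y)) = 0. -/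
/- The free unital associative algebra over the Laurent polynomial ring
`ℤ[μ, μ⁻¹]` (with `μ` central) on a type `X` of generators, realized as the
monoid algebra of the free monoid on `X`. -/
noncomputable section

abbrev LR : Type := LaurentPolynomial ℤ

abbrev LAlg (X : Type) : Type := MonoidAlgebra LR (FreeMonoid X)

/-- The central invertible scalar `μ`. -/
def μL {X : Type} : LAlg X := algebraMap LR (LAlg X) (LaurentPolynomial.T 1)

/-- An element is homogeneous of degree `d` if every word in its support has
degree `d`. -/
def LHomog {X : Type} (deg : X → ℤ) (d : ℤ) (a : LAlg X) : Prop :=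
  ∀ w ∈ a.coeff.support, wdeg deg w = d

/-- The signed Leibniz rule for a linear map on `LAlg X`. -/
def LLeibniz {X : Type} (deg : X → ℤ) (D : LAlg X →ₗ[LR] LAlg X) : Prop :=
  ∀ (d : ℤ) (v w : LAlg X), LHomog deg d v →
    D (v * w) = D v * w + sgn d • (v * D w)

/-- with the conventions of the Roseman DGA, the degree-2
generators `a₂₂(x,y)` with
`∂a₂₂(x,y) = μ a₁₂(u⁻ₓ,y) + a₁₂(u⁺ₓ,y) − a₁₁(u⁻ₓ,oₓ) a₁₂(oₓ,y)
 + a₂₁(x,u⁻ᵧ) + μ a₂₁(x,u⁺ᵧ) − a₂₁(x,oᵧ) a₁₁(oᵧ,u⁻ᵧ)`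
satisfy `∂(∂a₂₂(x,y)) = 0`. -/
theorem roseman_d_squared_a22
    {X S C : Type} (deg : X → ℤ) (o up um : C → S)
    (D : LAlg X →ₗ[LR] LAlg X) (hL : LLeibniz deg D)
    (A11 : S → S → LAlg X) (A21 : C → S → LAlg X) (A12 : S → C → LAlg X)
    (h11 : ∀ i j, LHomog deg 0 (A11 i j))
    (h21 : ∀ x i, LHomog deg 1 (A21 x i))
    (h12 : ∀ i x, LHomog deg 1 (A12 i x))
    (hdiag : ∀ i, A11 i i = 1 + μL)
    (hD11 : ∀ i j, D (A11 i j) = 0)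
    (hD21 : ∀ x i, D (A21 x i) =
      μL * A11 (um x) i + A11 (up x) i - A11 (um x) (o x) * A11 (o x) i)
    (hD12 : ∀ i x, D (A12 i x) =
      -(A11 i (um x)) - μL * A11 i (up x) + A11 i (o x) * A11 (o x) (um x))
    (A22 : C → C → LAlg X)
    (h22 : ∀ x y, LHomog deg 2 (A22 x y))
    (hD22 : ∀ x y, D (A22 x y) =
      μL * A12 (um x) y + A12 (up x) y - A11 (um x) (o x) * A12 (o x) y
        + A21 x (um y) + μL * A21 x (up y) - A21 x (o y) * A11 (o y) (um y))
    :
    ∀ (x y : C), D (D (A22 x y)) = 0 := by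
  have hμ : ∀ v : LAlg X, μL * v = LaurentPolynomial.T 1 • v := fun v =>
    (Algebra.smul_def _ v).symm
  have key0 : ∀ i j (v : LAlg X), D (A11 i j * v) = A11 i j * D v := by
    intro i j v
    rw [hL 0 _ _ (h11 i j), hD11, zero_mul, zero_add]
    simp [sgn]
  have key1 : ∀ x i j k, D (A21 x i * A11 j k) = D (A21 x i) * A11 j k := by
    intro x i j k
    rw [hL 1 _ _ (h21 x i), hD11, mul_zero, smul_zero, add_zero]
  intro x y
  rw [hD22 x y]
  simp only [hμ, map_add, map_sub, map_smul, key0, key1, hD21, hD12, hD11]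
  simp only [hμ, smul_add, smul_sub, smul_neg, mul_add, mul_sub, mul_neg,
    neg_mul, mul_neg, add_mul, sub_mul, smul_mul_assoc, mul_smul_comm, mul_assoc,
    smul_smul, neg_smul, one_smul, neg_neg]
  abel_nf
  simp only [mul_smul_comm]
  module
end
end

section
/- With the same conventions, define the degree-2 generator a₂(x) with ∂a₂(x) = μ a₂₁(x, u⁺ₓ) + μ a₁₂(u⁻ₓ, x) − a₁₁(u⁻ₓ, oₓ) a₁₂(oₓ, x). Then ∂(∂a₂(x)) = 0, using the convention a₁₁(i,i) = 1 + μ. -/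
/- The free unital associative algebra over the Laurent polynomial ring
`ℤ[μ, μ⁻¹]` (with `μ` central) on a type `X` of generators, realized as the
monoid algebra of the free monoid on `X`. -/
noncomputable section

lemma muL_mul_D {X : Type} (D : LAlg X →ₗ[LR] LAlg X) (a : LAlg X) :
    D (μL * a) = μL * D a := by
  have h : ∀ b : LAlg X, μL * b = (LaurentPolynomial.T 1 : LR) • b := by
    intro b; rw [Algebra.smul_def]; rfl
  rw [h, map_smul, h]

lemma muL_comm {X : Type} (a : LAlg X) : μL * a = a * μL := by
  exact (Algebra.commutes (LaurentPolynomial.T 1 : LR) a)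

lemma roseman_cancel {R : Type} [Ring R] (μ a b c d : R)
    (hc : ∀ z : R, μ * z = z * μ) :
    μ * (μ * d + (1 + μ) - a * c) + μ * (-(1 + μ) - μ * d + a * b)
      - a * (-b - μ * c + (1 + μ) * b) = 0 := by
  have h1 : a * (μ * c) = μ * (a * c) := by rw [hc c, ← mul_assoc, ← hc (a * c)]
  have h2 : a * ((1 + μ) * b) = a * b + μ * (a * b) := by
    rw [add_mul, one_mul, mul_add, hc b, ← mul_assoc, ← hc (a * b)]
  simp only [neg_sub, neg_add, mul_add, mul_sub, mul_neg, mul_one, h1, h2]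
  abel

/-- with the conventions of the Roseman DGA (in particular the
convention `a₁₁(i,i) = 1 + μ` for the diagonal degree-0 entries), the degree-2
generators `a₂(x)` with
`∂a₂(x) = μ a₂₁(x,u⁺ₓ) + μ a₁₂(u⁻ₓ,x) − a₁₁(u⁻ₓ,oₓ) a₁₂(oₓ,x)`
satisfy `∂(∂a₂(x)) = 0`. -/
theorem roseman_d_squared_a2
    {X S C : Type} (deg : X → ℤ) (o up um : C → S)
    (D : LAlg X →ₗ[LR] LAlg X) (hL : LLeibniz deg D)
    (A11 : S → S → LAlg X) (A21 : C → S → LAlg X) (A12 : S → C → LAlg X)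
    (h11 : ∀ i j, LHomog deg 0 (A11 i j))
    (h21 : ∀ x i, LHomog deg 1 (A21 x i))
    (h12 : ∀ i x, LHomog deg 1 (A12 i x))
    (hdiag : ∀ i, A11 i i = 1 + μL)
    (hD11 : ∀ i j, D (A11 i j) = 0)
    (hD21 : ∀ x i, D (A21 x i) =
      μL * A11 (um x) i + A11 (up x) i - A11 (um x) (o x) * A11 (o x) i)
    (hD12 : ∀ i x, D (A12 i x) =
      -(A11 i (um x)) - μL * A11 i (up x) + A11 i (o x) * A11 (o x) (um x))
    (A2 : C → LAlg X)
    (h2 : ∀ x, LHomog deg 2 (A2 x))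
    (hD2 : ∀ x, D (A2 x) =
      μL * A21 x (up x) + μL * A12 (um x) x - A11 (um x) (o x) * A12 (o x) x) :
    ∀ x : C, D (D (A2 x)) = 0 := by
  intro x
  have hsgn0 : sgn 0 = 1 := rfl
  have hLe : D (A11 (um x) (o x) * A12 (o x) x)
      = A11 (um x) (o x) * D (A12 (o x) x) := by
    rw [hL 0 _ _ (h11 (um x) (o x)), hD11, zero_mul, hsgn0, one_smul, zero_add]
  rw [hD2, map_sub, map_add, muL_mul_D, muL_mul_D, hLe, hD21, hD12, hD12,
    hdiag (up x), hdiag (um x), hdiag (o x)]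
  have hc := fun a : LAlg X => muL_comm a
  -- expand and cancel
  set a := A11 (um x) (o x)
  set b := A11 (o x) (um x)
  set c := A11 (o x) (up x)
  set d := A11 (um x) (up x)
  have : μL * (μL * d + (1 + μL) - a * c)
      + μL * (-(1 + μL) - μL * d + a * b)
      - a * (-b - μL * c + (1 + μL) * b) = 0 :=
    roseman_cancel μL a b c d hc
  linear_combination (norm := noncomm_ring) this
end
end

section
/- If two characteristic algebras A₁/I₁ and A₂/I₂ over ℤ are equivalent (in the sense of becoming tamely isomorphic after adjoining free generators with no relations), then for any prime p, the numbers of unital algebra homomorphisms (Aᵢ/Iᵢ) ⊗ ℤ/pℤ → ℤ/pℤ differ exactly by a factor of a power of p, namely p^{d₁} · N₁ = p^{d₂} · N₂ where dᵢ is the number of free generators adjoined to Aᵢ. -/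
/- Free unital associative ℤ-algebra on a type `X` of generators,
realized as the monoid algebra of the free monoid on `X`. -/
noncomputable section

/-! ### Auxiliary machinery -/

section Aux

variable {M : Type} [CommRing M]

/-- Ring homs out of a ring are the same as ℤ-algebra homs. -/
def ringHomEquivIntAlgHom (R S : Type*) [Ring R] [Ring S] : (R →+* S) ≃ (R →ₐ[ℤ] S) where
  toFun := RingHom.toIntAlgHom
  invFun := AlgHom.toRingHom
  left_inv f := rfl
  right_inv f := by ext; rfl

/-- Evaluation algebra hom determined by values of the generators. -/
def evAlg {X : Type} (g : X → M) : FAlg X →ₐ[ℤ] M :=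
  (MonoidAlgebra.lift ℤ M (FreeMonoid X)) (FreeMonoid.lift g)

/-- Ring homs out of the free algebra correspond to functions on generators. -/
def freeHomEquiv (X : Type) (M : Type) [CommRing M] : (FAlg X →+* M) ≃ (X → M) :=
  (ringHomEquivIntAlgHom _ _).trans
    ((MonoidAlgebra.lift ℤ M (FreeMonoid X)).symm.trans FreeMonoid.lift.symm)

lemma freeHomEquiv_symm_apply {X : Type} (g : X → M) (a : FAlg X) :
    (freeHomEquiv X M).symm g a = evAlg g a := rfl

lemma freeHomEquiv_eval {X : Type} (f : FAlg X →+* M) (a : FAlg X) :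
    evAlg (freeHomEquiv X M f) a = f a := by
  conv_rhs => rw [← (freeHomEquiv X M).symm_apply_apply f]
  rfl

lemma evAlg_mapDomain {X Y : Type} (e : X → Y) (g : Y → M) (a : FAlg X) :
    evAlg g (MonoidAlgebra.mapDomain (⇑(FreeMonoid.map e)) a) = evAlg (g ∘ e) a := by
  have h1 : (MonoidAlgebra.mapDomain (⇑(FreeMonoid.map e)) a : FAlg Y)
      = MonoidAlgebra.mapDomainAlgHom ℤ ℤ (FreeMonoid.map e) a := rfl
  rw [h1, ← AlgHom.comp_apply]
  have : (evAlg g).comp (MonoidAlgebra.mapDomainAlgHom ℤ ℤ (FreeMonoid.map e))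
      = evAlg (g ∘ e) := by
    apply MonoidAlgebra.algHom_ext
    intro w
    have hlift : (FreeMonoid.lift g).comp (FreeMonoid.map e) = FreeMonoid.lift (g ∘ e) := by
      apply FreeMonoid.hom_eq
      intro x
      simp
    have := DFunLike.congr_fun hlift w
    simp only [MonoidHom.comp_apply] at this
    simp [evAlg, MonoidAlgebra.mapDomainAlgHom, MonoidAlgebra.mapDomainRingHom,
      Finsupp.mapDomain_single, MonoidAlgebra.lift_single, this]
    exact Subsingleton.elim _ _
  rw [this]

/-- Hom counting for `RingQuot` of a "kill these elements" relation. -/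
def ringQuotHomEquiv {X : Type} (r : FAlg X → FAlg X → Prop)
    (S : Set (FAlg X)) (hr : ∀ a b, r a b ↔ b = 0 ∧ a ∈ S) (M : Type) [CommRing M] :
    (RingQuot r →+* M) ≃ {g : X → M // ∀ a ∈ S, evAlg g a = 0} :=
  RingQuot.lift.symm.trans <|
    ((freeHomEquiv X M).subtypeEquiv (fun f => by
      constructor
      · intro hf a ha
        rw [freeHomEquiv_eval]
        have := hf ((hr a 0).mpr ⟨rfl, ha⟩)
        simpa using this
      · intro hg x y hxy
        obtain ⟨hy, hx⟩ := (hr x y).mp hxy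
        subst hy
        rw [map_zero, ← freeHomEquiv_eval f x]
        exact hg x hx))

end Aux

section Count

variable {M : Type} [CommRing M]

/-- Splitting off the free coordinates. -/
def extSplitEquiv (n d : ℕ) (P : (Fin n → M) → Prop) :
    {g : Fin (n + d) → M // P (fun i => g (Fin.castAdd d i))}
      ≃ {g : Fin n → M // P g} × (Fin d → M) where
  toFun g := ⟨⟨fun i => g.1 (Fin.castAdd d i), g.2⟩, fun i => g.1 (Fin.natAdd n i)⟩
  invFun x := ⟨Fin.addCases x.1.1 x.2, by
    simpa only [Fin.addCases_left] using x.1.2⟩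
  left_inv g := by
    ext j
    refine Fin.addCases (fun i => ?_) (fun i => ?_) j <;> simp
  right_inv x := by
    refine Prod.ext (Subtype.ext ?_) ?_ <;> funext i <;> simp

/-- Precomposition with a ring isomorphism. -/
def homCompEquiv {R S T : Type*} [Ring R] [Ring S] [Ring T] (φ : R ≃+* S) :
    (S →+* T) ≃ (R →+* T) where
  toFun f := f.comp φ.toRingHom
  invFun f := f.comp φ.symm.toRingHom
  left_inv f := by ext x; simp
  right_inv f := by ext x; simp

lemma card_charExt (A : DGA) (d : ℕ) (p : ℕ) [Fact p.Prime] :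
    Nat.card (CharExtAlg A d →+* ZMod p)
      = p ^ d * Nat.card (CharAlg A →+* ZMod p) := by
  haveI : NeZero p := ⟨(Fact.out : p.Prime).ne_zero⟩
  set P : (Fin A.n → ZMod p) → Prop := fun g => ∀ i, evAlg g (A.D (fgen i)) = 0 with hP
  have e1 : (CharAlg A →+* ZMod p) ≃ {g : Fin A.n → ZMod p // P g} :=
    (ringQuotHomEquiv (charRel A) {a | ∃ i, a = A.D (fgen i)}
      (fun a b => Iff.rfl) (ZMod p)).trans
      (Equiv.subtypeEquivRight (fun g => by
        constructor
        · intro hg i; exact hg _ ⟨i, rfl⟩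
        · rintro hg a ⟨i, rfl⟩; exact hg i))
  have e2 : (CharExtAlg A d →+* ZMod p)
      ≃ {g : Fin (A.n + d) → ZMod p // P (fun i => g (Fin.castAdd d i))} :=
    (ringQuotHomEquiv (charExtRel A d)
      {a | ∃ i : Fin A.n,
        a = MonoidAlgebra.mapDomain (⇑(FreeMonoid.map (Fin.castAdd d))) (A.D (fgen i))}
      (fun a b => Iff.rfl) (ZMod p)).trans
      (Equiv.subtypeEquivRight (fun g => by
        constructor
        · intro hg i
          have := hg _ ⟨i, rfl⟩
          rwa [evAlg_mapDomain] at this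
        · rintro hg a ⟨i, rfl⟩
          rw [evAlg_mapDomain]
          exact hg i))
  rw [Nat.card_congr (e2.trans (extSplitEquiv A.n d P)), Nat.card_prod,
    Nat.card_congr e1, Nat.card_fun, Nat.card_zmod,
    show Nat.card (Fin d) = d from Nat.card_eq_fintype_card.trans (Fintype.card_fin d),
    mul_comm]

end Count


/-- if the characteristic algebras `A₁/I₁` and `A₂/I₂` of two
DGAs are equivalent, i.e. become (tamely) isomorphic after adjoining `d₁`
resp. `d₂` free generators with no relations, then for any prime `p` the
numbers of unital algebra homomorphisms `(Aᵢ/Iᵢ) ⊗ ℤ/pℤ → ℤ/pℤ` (equivalently,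
ring homomorphisms `Aᵢ/Iᵢ → ℤ/pℤ`) satisfy `p^{d₁} · N₁ = p^{d₂} · N₂`. -/
theorem char_equivalence_hom_counts (A₁ A₂ : DGA) (d₁ d₂ : ℕ)
    (p : ℕ) [Fact p.Prime]
    (h : Nonempty (CharExtAlg A₁ d₁ ≃+* CharExtAlg A₂ d₂)) :
    p ^ d₁ * Nat.card (CharAlg A₁ →+* ZMod p)
      = p ^ d₂ * Nat.card (CharAlg A₂ →+* ZMod p) := by
  obtain ⟨φ⟩ := h
  rw [← card_charExt, ← card_charExt,
    Nat.card_congr (homCompEquiv φ : (CharExtAlg A₂ d₂ →+* ZMod p) ≃ _)]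
end
end
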